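/- arXiv:2408.14903 — 2 statements merged into one kernel-verified Lean document; each statement's English description precedes it below -/
import Mathlib

section
/- Under (A2) with constants C and ρ, and for bounded measurable φ: X → ℝ, the functions g_s(x) = Σ_{k=0}^∞ (P_s^k φ̄)(x) satisfy, for all s, s' ∈ S: ‖g_s − g_{s'}‖_∞ ≤ (4C²/(1−ρ)²) osc(φ) · sup_{x∈X} d_TV(P_s(x,·), P_{s'}(x,·)). -/
open MeasureTheory Filter Finset ProbabilityTheory
open scoped ENNReal NNReal Topology

/-- Total variation distance between two measures: `sup_A |μ(A) - ν(A)|`. -/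
noncomputable def tvDist {X : Type*} [MeasurableSpace X] (μ ν : Measure X) : ℝ :=
  ⨆ A : {A : Set X // MeasurableSet A}, |(μ A.1).toReal - (ν A.1).toReal|

/-- `iterK P s k x` is the `k`-step transition probability `P_s^k(x, ·)`. -/
noncomputable def iterK {S X : Type*} [MeasurableSpace X]
    (P : S → X → Measure X) (s : S) : ℕ → X → Measure X
  | 0 => fun x => Measure.dirac x
  | n + 1 => fun x => (P s x).bind (iterK P s n)

/-- Supremum norm `‖f‖_∞ = sup_x |f x|`. -/
noncomputable def supNorm {X : Type*} (f : X → ℝ) : ℝ := ⨆ x, |f x|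

/-- Oscillation `osc(f) = sup_x f x - inf_x f x`. -/
noncomputable def osc {X : Type*} (f : X → ℝ) : ℝ := (⨆ x, f x) - (⨅ x, f x)

section Helpers

variable {X : Type*} [MeasurableSpace X]

lemma my_integrable {μ : Measure X} [IsFiniteMeasure μ] {f : X → ℝ} (hf : Measurable f)
    {B : ℝ} (hB : ∀ y, |f y| ≤ B) : Integrable f μ :=
  Integrable.mono' (integrable_const B) hf.aestronglyMeasurable
    (ae_of_all _ (fun y => by simpa [Real.norm_eq_abs] using hB y))

lemma tvDist_term_le_one (μ ν : Measure X) [IsProbabilityMeasure μ] [IsProbabilityMeasure ν]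
    (A : {A : Set X // MeasurableSet A}) : |(μ A.1).toReal - (ν A.1).toReal| ≤ 1 := by
  have h1 : (μ A.1).toReal ≤ 1 := by
    rw [← ENNReal.toReal_one]
    exact ENNReal.toReal_mono ENNReal.one_ne_top prob_le_one
  have h2 : (ν A.1).toReal ≤ 1 := by
    rw [← ENNReal.toReal_one]
    exact ENNReal.toReal_mono ENNReal.one_ne_top prob_le_one
  have h3 : 0 ≤ (μ A.1).toReal := ENNReal.toReal_nonneg
  have h4 : 0 ≤ (ν A.1).toReal := ENNReal.toReal_nonneg
  rw [abs_sub_le_iff]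
  constructor <;> linarith

lemma tvDist_le_one (μ ν : Measure X) [IsProbabilityMeasure μ] [IsProbabilityMeasure ν] :
    tvDist μ ν ≤ 1 := by
  haveI : Nonempty {A : Set X // MeasurableSet A} := ⟨⟨∅, MeasurableSet.empty⟩⟩
  exact ciSup_le (tvDist_term_le_one μ ν)

lemma tvDist_nonneg (μ ν : Measure X) : 0 ≤ tvDist μ ν :=
  Real.iSup_nonneg fun _ => abs_nonneg _

lemma abs_apply_le_tvDist (μ ν : Measure X) [IsProbabilityMeasure μ] [IsProbabilityMeasure ν]
    {A : Set X} (hA : MeasurableSet A) :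
    |(μ A).toReal - (ν A).toReal| ≤ tvDist μ ν :=
  le_ciSup (f := fun A : {A : Set X // MeasurableSet A} => |(μ A.1).toReal - (ν A.1).toReal|)
    ⟨1, by rintro _ ⟨A, rfl⟩; exact tvDist_term_le_one μ ν A⟩ ⟨A, hA⟩

lemma my_abs_integral_le {μ : Measure X} [IsProbabilityMeasure μ] {f : X → ℝ} (hf : Measurable f)
    {B : ℝ} (hB : ∀ y, |f y| ≤ B) : |∫ y, f y ∂μ| ≤ B := by
  have h1 : |∫ y, f y ∂μ| ≤ ∫ y, |f y| ∂μ := by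
    simpa [Real.norm_eq_abs] using norm_integral_le_integral_norm (μ := μ) f
  have h2 : ∫ y, |f y| ∂μ ≤ ∫ _, B ∂μ :=
    integral_mono (my_integrable hf hB).abs (integrable_const B) fun y => hB y
  have h3 : ∫ (_ : X), B ∂μ = B := by simp
  linarith

lemma osc_le_two_mul [Nonempty X] {f : X → ℝ} {B : ℝ} (hB : ∀ y, |f y| ≤ B) :
    osc f ≤ 2 * B := by
  have h1 : (⨆ y, f y) ≤ B := ciSup_le fun y => (abs_le.1 (hB y)).2
  have h2 : (-B : ℝ) ≤ ⨅ y, f y := le_ciInf fun y => (abs_le.1 (hB y)).1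
  show (⨆ y, f y) - (⨅ y, f y) ≤ 2 * B
  linarith

lemma my_osc_nonneg [Nonempty X] {f : X → ℝ} {B : ℝ} (hB : ∀ y, |f y| ≤ B) : 0 ≤ osc f := by
  have hbA : BddAbove (Set.range f) := ⟨B, by rintro _ ⟨y, rfl⟩; exact (abs_le.1 (hB y)).2⟩
  have hbB : BddBelow (Set.range f) := ⟨-B, by rintro _ ⟨y, rfl⟩; exact (abs_le.1 (hB y)).1⟩
  have h1 := ciInf_le hbB (Classical.arbitrary X)
  have h2 := le_ciSup hbA (Classical.arbitrary X)
  show (0:ℝ) ≤ (⨆ y, f y) - (⨅ y, f y)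
  linarith

/-- The key total-variation integral bound:
`|∫ f dμ − ∫ f dν| ≤ osc f * tvDist μ ν`. -/
lemma abs_integral_sub_le_osc_mul_tvDist [Nonempty X] (μ ν : Measure X)
    [IsProbabilityMeasure μ] [IsProbabilityMeasure ν] {f : X → ℝ} (hf : Measurable f)
    {B : ℝ} (hB : ∀ y, |f y| ≤ B) :
    |∫ y, f y ∂μ - ∫ y, f y ∂ν| ≤ osc f * tvDist μ ν := by
  have hbA : BddAbove (Set.range f) := ⟨B, by rintro _ ⟨y, rfl⟩; exact (abs_le.1 (hB y)).2⟩
  have hbB : BddBelow (Set.range f) := ⟨-B, by rintro _ ⟨y, rfl⟩; exact (abs_le.1 (hB y)).1⟩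
  set c := ⨅ y, f y with hc
  set g : X → ℝ := fun y => f y - c with hgdef
  have hgm : Measurable g := hf.sub measurable_const
  have hg0 : ∀ y, 0 ≤ g y := fun y => sub_nonneg.2 (ciInf_le hbB y)
  have hgM : ∀ y, g y ≤ osc f := fun y => sub_le_sub_right (le_ciSup hbA y) c
  have hM0 : 0 ≤ osc f := le_trans (hg0 (Classical.arbitrary X)) (hgM _)
  have hsetm : ∀ t : ℝ, MeasurableSet {a | t ≤ g a} := fun t => hgm measurableSet_Ici
  -- layer cake representation
  have key : ∀ (m : Measure X), IsProbabilityMeasure m →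
      ∫ y, f y ∂m = (∫ t in Set.Ioc 0 (osc f), (m {a | t ≤ g a}).toReal) + c := by
    intro m hm
    have hgi : Integrable g m :=
      my_integrable hgm (B := osc f) fun y => by rw [abs_of_nonneg (hg0 y)]; exact hgM y
    have h1 : ∫ y, g y ∂m = ∫ t in Set.Ioc 0 (osc f), (m {a | t ≤ g a}).toReal :=
      hgi.integral_eq_integral_Ioc_meas_le (ae_of_all _ hg0) (ae_of_all _ hgM)
    have h2 : ∫ y, g y ∂m = ∫ y, f y ∂m - c := by
      rw [hgdef]
      rw [integral_sub (my_integrable hf hB) (integrable_const c), integral_const]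
      simp
    linarith
  -- integrability of layer functions
  have hFint : ∀ (m : Measure X), IsProbabilityMeasure m →
      IntegrableOn (fun t => (m {a | t ≤ g a}).toReal) (Set.Ioc 0 (osc f)) := by
    intro m hm
    have hmeas : Measurable fun t => (m {a | t ≤ g a}).toReal := by
      apply Measurable.ennreal_toReal
      apply Antitone.measurable
      intro t t' htt'
      exact measure_mono fun a ha => le_trans htt' ha
    refine Integrable.mono' (g := fun _ => (1:ℝ)) (integrableOn_const ?_)
      hmeas.aestronglyMeasurable (ae_of_all _ fun t => ?_)
    · simp [Real.volume_Ioc]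
    · rw [Real.norm_eq_abs, abs_of_nonneg ENNReal.toReal_nonneg]
      rw [← ENNReal.toReal_one]
      exact ENNReal.toReal_mono ENNReal.one_ne_top prob_le_one
  have hμi := hFint μ inferInstance
  have hνi := hFint ν inferInstance
  have hdiff : ∫ y, f y ∂μ - ∫ y, f y ∂ν
      = ∫ t in Set.Ioc 0 (osc f), ((μ {a | t ≤ g a}).toReal - (ν {a | t ≤ g a}).toReal) := by
    rw [key μ inferInstance, key ν inferInstance, integral_sub hμi hνi]
    ring
  rw [hdiff]
  have e1 : |∫ t in Set.Ioc 0 (osc f), ((μ {a | t ≤ g a}).toReal - (ν {a | t ≤ g a}).toReal)|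
      ≤ ∫ t in Set.Ioc 0 (osc f), |(μ {a | t ≤ g a}).toReal - (ν {a | t ≤ g a}).toReal| := by
    simpa [Real.norm_eq_abs] using norm_integral_le_integral_norm
      (μ := volume.restrict (Set.Ioc 0 (osc f)))
      (fun t => ((μ {a | t ≤ g a}).toReal - (ν {a | t ≤ g a}).toReal))
  have e2 : ∫ t in Set.Ioc 0 (osc f), |(μ {a | t ≤ g a}).toReal - (ν {a | t ≤ g a}).toReal|
      ≤ ∫ (_ : ℝ) in Set.Ioc 0 (osc f), tvDist μ ν := by
    refine integral_mono (hμi.sub hνi).abs (integrableOn_const ?_) fun t => ?_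
    · simp [Real.volume_Ioc]
    · exact abs_apply_le_tvDist μ ν (hsetm t)
  have e3 : ∫ (_ : ℝ) in Set.Ioc 0 (osc f), tvDist μ ν = osc f * tvDist μ ν := by
    rw [setIntegral_const, smul_eq_mul, measureReal_def, Real.volume_Ioc, ENNReal.toReal_ofReal (by linarith)]
    norm_num
  linarith

end Helpers

section Kernels

variable {X : Type*} [MeasurableSpace X]

lemma prob_bind (μ : Measure X) [IsProbabilityMeasure μ] {κ : X → Measure X}
    (hκ : Measurable κ) (hκp : ∀ x, IsProbabilityMeasure (κ x)) :
    IsProbabilityMeasure (μ.bind κ) := by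
  constructor
  rw [Measure.bind_apply MeasurableSet.univ hκ.aemeasurable]
  rw [lintegral_congr (fun x => (hκp x).measure_univ)]
  simp

/-- Bochner integral of a bounded nonneg measurable function against a bind. -/
lemma integral_bind_nonneg (μ : Measure X) [IsProbabilityMeasure μ] {κ : X → Measure X}
    (hκ : Measurable κ) (hκp : ∀ x, IsProbabilityMeasure (κ x)) {f : X → ℝ} (hf : Measurable f)
    {B : ℝ} (h0 : ∀ y, 0 ≤ f y) (hB : ∀ y, f y ≤ B) :
    ∫ y, f y ∂(μ.bind κ) = ∫ x, ∫ y, f y ∂(κ x) ∂μ := by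
  haveI := prob_bind μ hκ hκp
  have hof : Measurable fun y => ENNReal.ofReal (f y) := ENNReal.measurable_ofReal.comp hf
  have hfin : ∀ x, ∫⁻ y, ENNReal.ofReal (f y) ∂(κ x) ≠ ⊤ := by
    intro x
    refine ne_of_lt (lt_of_le_of_lt (le_trans (lintegral_mono fun y =>
      ENNReal.ofReal_le_ofReal (hB y)) (le_of_eq (lintegral_const _))) ?_)
    haveI := hκp x
    simp [measure_univ]
  have h3 : ∀ (m : Measure X), IsProbabilityMeasure m →
      ∫ y, f y ∂m = (∫⁻ y, ENNReal.ofReal (f y) ∂m).toReal := by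
    intro m hm
    exact integral_eq_lintegral_of_nonneg_ae (ae_of_all _ h0) hf.aestronglyMeasurable
  have hlm : Measurable fun x => ∫⁻ y, ENNReal.ofReal (f y) ∂(κ x) :=
    (Measure.measurable_lintegral hof).comp hκ
  rw [h3 _ inferInstance, Measure.lintegral_bind hκ.aemeasurable hof.aemeasurable]
  have hR : ∫ x, ∫ y, f y ∂(κ x) ∂μ
      = (∫⁻ x, ∫⁻ y, ENNReal.ofReal (f y) ∂(κ x) ∂μ).toReal := by
    have h4 : (fun x => ∫ y, f y ∂(κ x))
        = fun x => (∫⁻ y, ENNReal.ofReal (f y) ∂(κ x)).toReal := by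
      funext x
      exact h3 (κ x) (hκp x)
    rw [h4]
    rw [integral_eq_lintegral_of_nonneg_ae (ae_of_all _ fun x => ENNReal.toReal_nonneg)
      hlm.ennreal_toReal.aestronglyMeasurable]
    congr 1
    apply lintegral_congr
    intro x
    rw [ENNReal.ofReal_toReal (hfin x)]
  rw [hR]

lemma measurable_integral_kernel {κ : X → Measure X}
    (hκ : Measurable κ) (hκp : ∀ x, IsProbabilityMeasure (κ x)) {f : X → ℝ} (hf : Measurable f)
    {B : ℝ} (hB : ∀ y, |f y| ≤ B) :
    Measurable fun x => ∫ y, f y ∂(κ x) := by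
  have key : (fun x => ∫ y, f y ∂(κ x)) = fun x =>
      (∫⁻ y, ENNReal.ofReal (f y) ∂(κ x)).toReal
        - (∫⁻ y, ENNReal.ofReal (-f y) ∂(κ x)).toReal := by
    funext x
    haveI := hκp x
    exact integral_eq_lintegral_pos_part_sub_lintegral_neg_part (my_integrable hf hB)
  rw [key]
  exact (((Measure.measurable_lintegral
      (ENNReal.measurable_ofReal.comp hf)).comp hκ).ennreal_toReal).sub
    (((Measure.measurable_lintegral
      (ENNReal.measurable_ofReal.comp hf.neg)).comp hκ).ennreal_toReal)

/-- Bochner integral of a bounded measurable function against a bind. -/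
lemma integral_bind_bdd (μ : Measure X) [IsProbabilityMeasure μ] {κ : X → Measure X}
    (hκ : Measurable κ) (hκp : ∀ x, IsProbabilityMeasure (κ x)) {f : X → ℝ} (hf : Measurable f)
    {B : ℝ} (hB : ∀ y, |f y| ≤ B) :
    ∫ y, f y ∂(μ.bind κ) = ∫ x, ∫ y, f y ∂(κ x) ∂μ := by
  haveI := prob_bind μ hκ hκp
  set g₁ : X → ℝ := fun y => max (f y) 0 with hg₁
  set g₂ : X → ℝ := fun y => max (-f y) 0 with hg₂
  have hg₁m : Measurable g₁ := hf.max measurable_const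
  have hg₂m : Measurable g₂ := hf.neg.max measurable_const
  have hg₁0 : ∀ y, 0 ≤ g₁ y := fun y => le_max_right _ _
  have hg₂0 : ∀ y, 0 ≤ g₂ y := fun y => le_max_right _ _
  have hg₁B : ∀ y, g₁ y ≤ max B 0 :=
    fun y => max_le_max (le_trans (le_abs_self _) (hB y)) le_rfl
  have hg₂B : ∀ y, g₂ y ≤ max B 0 :=
    fun y => max_le_max (le_trans (neg_le_abs _) (hB y)) le_rfl
  have hsub : ∀ y, f y = g₁ y - g₂ y := fun y => (max_zero_sub_max_neg_zero_eq_self (f y)).symm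
  have hint : ∀ (m : Measure X), IsProbabilityMeasure m →
      ∫ y, f y ∂m = ∫ y, g₁ y ∂m - ∫ y, g₂ y ∂m := by
    intro m hm
    rw [← integral_sub (my_integrable hg₁m (fun y => by
          rw [abs_of_nonneg (hg₁0 y)]; exact hg₁B y))
        (my_integrable hg₂m (fun y => by rw [abs_of_nonneg (hg₂0 y)]; exact hg₂B y))]
    exact integral_congr_ae (ae_of_all _ fun y => hsub y)
  have e₁ := integral_bind_nonneg μ hκ hκp hg₁m hg₁0 hg₁B
  have e₂ := integral_bind_nonneg μ hκ hκp hg₂m hg₂0 hg₂B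
  rw [hint _ inferInstance, e₁, e₂]
  rw [← integral_sub]
  · apply integral_congr_ae
    apply ae_of_all
    intro x
    haveI := hκp x
    exact (hint (κ x) inferInstance).symm
  · refine my_integrable (measurable_integral_kernel hκ hκp hg₁m
        (fun y => by rw [abs_of_nonneg (hg₁0 y)]; exact hg₁B y)) (B := max B 0) fun x => ?_
    haveI := hκp x
    exact my_abs_integral_le hg₁m fun y => by rw [abs_of_nonneg (hg₁0 y)]; exact hg₁B y
  · refine my_integrable (measurable_integral_kernel hκ hκp hg₂m
        (fun y => by rw [abs_of_nonneg (hg₂0 y)]; exact hg₂B y)) (B := max B 0) fun x => ?_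
    haveI := hκp x
    exact my_abs_integral_le hg₂m fun y => by rw [abs_of_nonneg (hg₂0 y)]; exact hg₂B y

end Kernels

lemma abs_tsum_le_tsum_abs {f : ℕ → ℝ} (h : Summable fun k => |f k|) :
    |∑' k, f k| ≤ ∑' k, |f k| := by
  simpa [Real.norm_eq_abs] using
    norm_tsum_le_tsum_norm (f := f) (by simpa [Real.norm_eq_abs] using h)

section IterKLemmas

variable {S X : Type*} [MeasurableSpace S] [MeasurableSpace X]

lemma measurable_iterK (P : S → X → Measure X) (hPm : ∀ t, Measurable (P t)) (t : S) (k : ℕ) :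
    Measurable (iterK P t k) := by
  induction k with
  | zero => exact Measure.measurable_dirac
  | succ n ih =>
    show Measurable fun x => (P t x).bind (iterK P t n)
    exact (Measure.measurable_bind' ih).comp (hPm t)

lemma prob_iterK (P : S → X → Measure X) (hPm : ∀ t, Measurable (P t))
    (hPprob : ∀ t x, IsProbabilityMeasure (P t x)) (t : S) (k : ℕ) :
    ∀ x, IsProbabilityMeasure (iterK P t k x) := by
  induction k with
  | zero => intro x; show IsProbabilityMeasure (Measure.dirac x); infer_instance
  | succ n ih =>
    intro x
    show IsProbabilityMeasure ((P t x).bind (iterK P t n))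
    haveI := hPprob t x
    exact prob_bind (P t x) (measurable_iterK P hPm t n) ih

end IterKLemmas

/-- The solution of the Poisson equation: `g_s x = Σ_{k=0}^∞ (P_s^k φ̄)(x)`
where `φ̄ = φ - π(φ)`. -/
noncomputable def gfun {S X : Type*} [MeasurableSpace X]
    (P : S → X → Measure X) (π : Measure X) (φ : X → ℝ) (s : S) (x : X) : ℝ :=
  ∑' k : ℕ, ∫ y, (φ y - ∫ z, φ z ∂π) ∂(iterK P s k x)

/-- `Pg P π φ s x = (P_s g_s)(x)`. -/
noncomputable def Pg {S X : Type*} [MeasurableSpace X]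
    (P : S → X → Measure X) (π : Measure X) (φ : X → ℝ) (s : S) (x : X) : ℝ :=
  ∫ y, gfun P π φ s y ∂(P s x)

set_option maxHeartbeats 2000000 in
/-- Under (A2), the Poisson solutions satisfy, for all `s, s'`:
`‖g_s − g_{s'}‖_∞ ≤ (4C²/(1−ρ)²) osc(φ) sup_x d_TV(P_s(x,·), P_{s'}(x,·))`. -/
theorem stmt5 {S X : Type*} [MeasurableSpace S] [MeasurableSpace X]
    (P : S → X → Measure X) (π : Measure X) [IsProbabilityMeasure π]
    (hPprob : ∀ s x, IsProbabilityMeasure (P s x))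
    (hPmeas : ∀ A : Set X, MeasurableSet A → Measurable fun p : S × X => P p.1 p.2 A)
    (hinv : ∀ s, π.bind (P s) = π)
    (C ρ : ℝ) (hρ : ρ ∈ Set.Ico (0 : ℝ) 1)
    (hA2 : ∀ s x k, tvDist (iterK P s k x) π ≤ C * ρ ^ k)
    (φ : X → ℝ) (hφm : Measurable φ) (hφb : ∃ B, ∀ x, |φ x| ≤ B)
    (s s' : S) :
    supNorm (fun x => gfun P π φ s x - gfun P π φ s' x)
      ≤ 4 * C ^ 2 / (1 - ρ) ^ 2 * osc φ * ⨆ x, tvDist (P s x) (P s' x) := by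
  obtain ⟨hρ0, hρ1⟩ := hρ
  obtain ⟨B, hB⟩ := hφb
  have hXne : Nonempty X := by
    by_contra hcon
    rw [not_nonempty_iff] at hcon
    have h1 := measure_univ (μ := π)
    rw [Set.univ_eq_empty_iff.mpr hcon, measure_empty] at h1
    exact zero_ne_one h1
  have hPm : ∀ t, Measurable (P t) := fun t =>
    Measure.measurable_of_measurable_coe _ fun A hA =>
      (hPmeas A hA).comp measurable_prodMk_left
  have hIKm : ∀ t k, Measurable (iterK P t k) := fun t k => measurable_iterK P hPm t k
  have hIKp : ∀ t k x, IsProbabilityMeasure (iterK P t k x) :=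
    fun t k => prob_iterK P hPm hPprob t k
  -- constants
  set M := osc φ with hMdef
  have hM0 : 0 ≤ M := my_osc_nonneg hB
  set D := ⨆ x, tvDist (P s x) (P s' x) with hDdef
  have hDle : ∀ x, tvDist (P s x) (P s' x) ≤ D := by
    intro x
    rw [hDdef]
    refine le_ciSup (f := fun x => tvDist (P s x) (P s' x)) ⟨1, ?_⟩ x
    rintro _ ⟨x', rfl⟩
    haveI := hPprob s x'; haveI := hPprob s' x'
    exact tvDist_le_one _ _
  have hD0 : 0 ≤ D := Real.iSup_nonneg fun x => tvDist_nonneg _ _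
  have hC0 : 0 ≤ C := by
    have h1 := hA2 s (Classical.arbitrary X) 0
    have h0 := tvDist_nonneg (iterK P s 0 (Classical.arbitrary X)) π
    simpa using le_trans h0 h1
  set c := ∫ z, φ z ∂π with hcdef
  set ψ : X → ℝ := fun y => φ y - c with hψdef
  have hψm : Measurable ψ := hφm.sub measurable_const
  have hψB : ∀ y, |ψ y| ≤ B + |c| := by
    intro y
    have h1 : |φ y - c| ≤ |φ y| + |c| := by
      rw [sub_eq_add_neg]
      exact le_trans (abs_add_le _ _) (by rw [abs_neg])
    exact le_trans h1 (add_le_add (hB y) le_rfl)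
  set I : Measure X → ℝ := fun m => ∫ y, ψ y ∂m with hIdef
  have hIπ : I π = 0 := by
    show ∫ y, (φ y - c) ∂π = 0
    rw [integral_sub (my_integrable hφm hB) (integrable_const c), integral_const]
    simp [hcdef]
  have hgf : ∀ t x, gfun P π φ t x = ∑' k, I (iterK P t k x) := fun t x => rfl
  -- TV bound for I
  have hTV : ∀ (μ ν : Measure X), IsProbabilityMeasure μ → IsProbabilityMeasure ν →
      |I μ - I ν| ≤ M * tvDist μ ν := by
    intro μ ν hμ hν
    have h1 : I μ - I ν = (∫ y, φ y ∂μ) - ∫ y, φ y ∂ν := by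
      show ((∫ y, (φ y - c) ∂μ) - ∫ y, (φ y - c) ∂ν) = _
      rw [integral_sub (my_integrable hφm hB) (integrable_const c),
        integral_sub (my_integrable hφm hB) (integrable_const c)]
      simp
    rw [h1]
    exact abs_integral_sub_le_osc_mul_tvDist μ ν hφm hB
  have hIb : ∀ t k x, |I (iterK P t k x)| ≤ M * (C * ρ ^ k) := by
    intro t k x
    have h1 : |I (iterK P t k x) - I π| ≤ M * tvDist (iterK P t k x) π :=
      hTV _ _ (hIKp t k x) inferInstance
    rw [hIπ, sub_zero] at h1
    exact le_trans h1 (mul_le_mul_of_nonneg_left (hA2 t x k) hM0)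
  have hb0 : ∀ m : ℕ, (0:ℝ) ≤ M * (C * ρ ^ m) :=
    fun m => mul_nonneg hM0 (mul_nonneg hC0 (pow_nonneg hρ0 m))
  -- the functions h_m = P_s^m φ̄
  set hfun : ℕ → X → ℝ := fun m z => I (iterK P s m z) with hhdef
  have hhm : ∀ m, Measurable (hfun m) := fun m =>
    measurable_integral_kernel (hIKm s m) (hIKp s m) hψm hψB
  have hhb : ∀ m z, |hfun m z| ≤ M * (C * ρ ^ m) := fun m z => hIb s m z
  -- the functions w_m = (P_s - P_{s'}) h_m
  set wfun : ℕ → X → ℝ := fun m y => (∫ z, hfun m z ∂(P s y)) - ∫ z, hfun m z ∂(P s' y)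
    with hwdef
  have hwm : ∀ m, Measurable (wfun m) := fun m =>
    (measurable_integral_kernel (hPm s) (hPprob s) (hhm m) (hhb m)).sub
      (measurable_integral_kernel (hPm s') (hPprob s') (hhm m) (hhb m))
  have hwb : ∀ m y, |wfun m y| ≤ 2 * (M * (C * ρ ^ m)) * D := by
    intro m y
    haveI := hPprob s y; haveI := hPprob s' y
    have h1 : |wfun m y| ≤ osc (hfun m) * tvDist (P s y) (P s' y) :=
      abs_integral_sub_le_osc_mul_tvDist _ _ (hhm m) (hhb m)
    refine le_trans h1 ?_
    exact mul_le_mul (osc_le_two_mul (hhb m)) (hDle y) (tvDist_nonneg _ _)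
      (by nlinarith [hb0 m])
  have hwπ : ∀ m, ∫ y, wfun m y ∂π = 0 := by
    intro m
    have hint1 : Integrable (fun y => ∫ z, hfun m z ∂(P s y)) π :=
      my_integrable (measurable_integral_kernel (hPm s) (hPprob s) (hhm m) (hhb m))
        (B := M * (C * ρ ^ m)) fun y => by
          haveI := hPprob s y
          exact my_abs_integral_le (hhm m) (hhb m)
    have hint2 : Integrable (fun y => ∫ z, hfun m z ∂(P s' y)) π :=
      my_integrable (measurable_integral_kernel (hPm s') (hPprob s') (hhm m) (hhb m))
        (B := M * (C * ρ ^ m)) fun y => by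
          haveI := hPprob s' y
          exact my_abs_integral_le (hhm m) (hhb m)
    show ∫ y, ((∫ z, hfun m z ∂(P s y)) - ∫ z, hfun m z ∂(P s' y)) ∂π = 0
    rw [integral_sub hint1 hint2,
      ← integral_bind_bdd π (hPm s) (hPprob s) (hhm m) (hhb m),
      ← integral_bind_bdd π (hPm s') (hPprob s') (hhm m) (hhb m),
      hinv s, hinv s']
    ring
  -- the functions Pw j m = P_{s'}^j w_m
  set Pw : ℕ → ℕ → X → ℝ := fun j m x => ∫ y, wfun m y ∂(iterK P s' j x) with hPwdef
  have hPwm : ∀ j m, Measurable (Pw j m) := fun j m =>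
    measurable_integral_kernel (hIKm s' j) (hIKp s' j) (hwm m) (hwb m)
  have hPwb : ∀ j m x, |Pw j m x| ≤ 4 * M * C ^ 2 * D * ρ ^ (m + j) := by
    intro j m x
    have h1 : |Pw j m x - ∫ y, wfun m y ∂π| ≤ osc (wfun m) * tvDist (iterK P s' j x) π := by
      haveI := hIKp s' j x
      exact abs_integral_sub_le_osc_mul_tvDist _ _ (hwm m) (hwb m)
    rw [hwπ m, sub_zero] at h1
    have h2 : osc (wfun m) ≤ 2 * (2 * (M * (C * ρ ^ m)) * D) := osc_le_two_mul (hwb m)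
    have h4 := hA2 s' x j
    have h5 := tvDist_nonneg (iterK P s' j x) π
    have h6 : (0:ℝ) ≤ 2 * (2 * (M * (C * ρ ^ m)) * D) := by nlinarith [hb0 m]
    calc |Pw j m x| ≤ osc (wfun m) * tvDist (iterK P s' j x) π := h1
      _ ≤ (2 * (2 * (M * (C * ρ ^ m)) * D)) * (C * ρ ^ j) := mul_le_mul h2 h4 h5 h6
      _ = 4 * M * C ^ 2 * D * ρ ^ (m + j) := by rw [pow_add]; ring
  -- one-step integral identity
  have hIbind : ∀ t k x, I (iterK P t (k+1) x) = ∫ y, I (iterK P t k y) ∂(P t x) := by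
    intro t k x
    haveI := hPprob t x
    show I ((P t x).bind (iterK P t k)) = _
    exact integral_bind_bdd (P t x) (hIKm t k) (hIKp t k) hψm hψB
  -- telescoping identity
  have hId : ∀ k x, I (iterK P s k x) - I (iterK P s' k x)
      = ∑ j ∈ Finset.range k, Pw j (k - 1 - j) x := by
    intro k
    induction k with
    | zero =>
      intro x
      rw [show iterK P s 0 x = Measure.dirac x from rfl,
        show iterK P s' 0 x = Measure.dirac x from rfl]
      simp
    | succ k ih =>
      intro x
      haveI := hPprob s' x
      have hinth : Integrable (hfun k) (P s' x) := my_integrable (hhm k) (hhb k)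
      have hintPw : ∀ j m, Integrable (Pw j m) (P s' x) :=
        fun j m => my_integrable (hPwm j m) (hPwb j m)
      have e1 : I (iterK P s (k+1) x) = ∫ y, hfun k y ∂(P s x) := hIbind s k x
      have e3 : (fun y => I (iterK P s' k y))
          = fun y => hfun k y - ∑ j ∈ Finset.range k, Pw j (k - 1 - j) y := by
        funext y
        have h1 := ih y
        have h2 : hfun k y = I (iterK P s k y) := rfl
        linarith
      have e2 : I (iterK P s' (k+1) x)
          = (∫ y, hfun k y ∂(P s' x))
            - ∑ j ∈ Finset.range k, ∫ y, Pw j (k - 1 - j) y ∂(P s' x) := by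
        rw [hIbind s' k x, e3, integral_sub hinth (integrable_finset_sum _
          (fun j _ => hintPw j (k - 1 - j))), integral_finset_sum _
          (fun j _ => hintPw j (k - 1 - j))]
      have e4 : ∀ j m, ∫ y, Pw j m y ∂(P s' x) = Pw (j+1) m x := by
        intro j m
        show ∫ y, (∫ z, wfun m z ∂(iterK P s' j y)) ∂(P s' x)
          = ∫ z, wfun m z ∂(iterK P s' (j+1) x)
        rw [show iterK P s' (j+1) x = (P s' x).bind (iterK P s' j) from rfl]
        exact (integral_bind_bdd (P s' x) (hIKm s' j) (hIKp s' j) (hwm m) (hwb m)).symm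
      have e5 : wfun k x = Pw 0 k x := by
        show wfun k x = ∫ y, wfun k y ∂(iterK P s' 0 x)
        rw [show iterK P s' 0 x = Measure.dirac x from rfl,
          integral_dirac' _ _ (hwm k).stronglyMeasurable]
      have e6 : ∑ j ∈ Finset.range (k+1), Pw j (k + 1 - 1 - j) x
          = Pw 0 k x + ∑ j ∈ Finset.range k, Pw (j+1) (k - 1 - j) x := by
        rw [Finset.sum_range_succ' (fun j => Pw j (k + 1 - 1 - j) x) k]
        simp only [Nat.add_sub_cancel, Nat.sub_zero]
        rw [add_comm]
        congr 1
        apply Finset.sum_congr rfl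
        intro i _
        have : k - (i + 1) = k - 1 - i := by omega
        rw [this]
      have e7 : I (iterK P s (k+1) x) - I (iterK P s' (k+1) x)
          = wfun k x + ∑ j ∈ Finset.range k, Pw (j+1) (k - 1 - j) x := by
        rw [e1, e2]
        have : ∑ j ∈ Finset.range k, ∫ y, Pw j (k - 1 - j) y ∂(P s' x)
            = ∑ j ∈ Finset.range k, Pw (j+1) (k - 1 - j) x :=
          Finset.sum_congr rfl fun j _ => e4 j (k - 1 - j)
        rw [this]
        show (∫ y, hfun k y ∂(P s x))
          - ((∫ y, hfun k y ∂(P s' x)) - _) = ((∫ z, hfun k z ∂(P s x)) - _) + _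
        ring
      rw [e7, e6, e5]
  -- bound on the k-th difference
  have hΔb : ∀ k x, |I (iterK P s k x) - I (iterK P s' k x)|
      ≤ 4 * M * C ^ 2 * D * ((k:ℝ) * ρ ^ (k - 1)) := by
    intro k x
    rw [hId k x]
    calc |∑ j ∈ Finset.range k, Pw j (k - 1 - j) x|
        ≤ ∑ j ∈ Finset.range k, |Pw j (k - 1 - j) x| := Finset.abs_sum_le_sum_abs _ _
      _ ≤ ∑ _j ∈ Finset.range k, 4 * M * C ^ 2 * D * ρ ^ (k - 1) := by
          apply Finset.sum_le_sum
          intro j hj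
          have h1 := hPwb j (k - 1 - j) x
          have he : (k - 1 - j) + j = k - 1 := by
            rw [Finset.mem_range] at hj; omega
          rwa [he] at h1
      _ = (k:ℝ) * (4 * M * C ^ 2 * D * ρ ^ (k - 1)) := by
          rw [Finset.sum_const, Finset.card_range, nsmul_eq_mul]
      _ = 4 * M * C ^ 2 * D * ((k:ℝ) * ρ ^ (k - 1)) := by ring
  -- summability facts
  have hgeo : Summable (fun k : ℕ => ρ ^ k) := summable_geometric_of_lt_one hρ0 hρ1
  have hsumI : ∀ t x, Summable fun k => I (iterK P t k x) := by
    intro t x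
    apply Summable.of_abs
    exact Summable.of_nonneg_of_le (fun k => abs_nonneg _) (fun k => hIb t k x)
      (by simpa [mul_assoc] using hgeo.mul_left (M * C))
  have hnorm : ‖ρ‖ < 1 := by rwa [Real.norm_eq_abs, abs_of_nonneg hρ0]
  have hmul : Summable (fun k : ℕ => (k:ℝ) * ρ ^ k) := by
    have h1 := summable_pow_mul_geometric_of_norm_lt_one 1 hnorm
    simpa using h1
  have hu1 : Summable (fun k : ℕ => ((k:ℝ) + 1) * ρ ^ k) := by
    have := hmul.add hgeo
    simpa [add_mul, one_mul] using this
  have hu : Summable (fun k : ℕ => (k:ℝ) * ρ ^ (k - 1)) := by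
    rw [← summable_nat_add_iff 1]
    apply hu1.congr
    intro k
    push_cast [Nat.add_sub_cancel]
    ring
  have hutsum : ∑' k : ℕ, (k:ℝ) * ρ ^ (k - 1) = 1 / (1 - ρ) ^ 2 := by
    have hne : (1:ℝ) - ρ ≠ 0 := by intro hcon; linarith [hcon]
    rw [Summable.tsum_eq_zero_add hu]
    have hx : ∀ k : ℕ, ((k+1:ℕ):ℝ) * ρ ^ ((k+1) - 1) = (k:ℝ) * ρ ^ k + ρ ^ k := by
      intro k
      push_cast [Nat.add_sub_cancel]
      ring
    rw [tsum_congr hx, Summable.tsum_add hmul hgeo, tsum_coe_mul_geometric_of_norm_lt_one hnorm,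
      tsum_geometric_of_lt_one hρ0 hρ1]
    push_cast
    field_simp
    ring
  -- pointwise bound
  have hpt : ∀ x, |gfun P π φ s x - gfun P π φ s' x| ≤ 4 * C ^ 2 / (1 - ρ) ^ 2 * M * D := by
    intro x
    have hdx : gfun P π φ s x - gfun P π φ s' x
        = ∑' k, (I (iterK P s k x) - I (iterK P s' k x)) := by
      rw [hgf s x, hgf s' x]
      exact (Summable.tsum_sub (hsumI s x) (hsumI s' x)).symm
    rw [hdx]
    have hsd : Summable fun k => |I (iterK P s k x) - I (iterK P s' k x)| :=
      Summable.of_nonneg_of_le (fun k => abs_nonneg _) (fun k => hΔb k x)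
        (hu.mul_left _)
    have hne : (1:ℝ) - ρ ≠ 0 := by intro hcon; linarith [hcon]
    calc |∑' k, (I (iterK P s k x) - I (iterK P s' k x))|
        ≤ ∑' k, |I (iterK P s k x) - I (iterK P s' k x)| :=
          abs_tsum_le_tsum_abs hsd
      _ ≤ ∑' k : ℕ, 4 * M * C ^ 2 * D * ((k:ℝ) * ρ ^ (k - 1)) :=
          Summable.tsum_le_tsum (fun k => hΔb k x) hsd (hu.mul_left _)
      _ = 4 * M * C ^ 2 * D * ∑' k : ℕ, (k:ℝ) * ρ ^ (k - 1) := tsum_mul_left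
      _ = 4 * M * C ^ 2 * D * (1 / (1 - ρ) ^ 2) := by rw [hutsum]
      _ = 4 * C ^ 2 / (1 - ρ) ^ 2 * M * D := by
          rw [mul_one_div, div_mul_eq_mul_div, div_mul_eq_mul_div]
          congr 1
          ring
  -- conclusion
  have hRHS0 : 0 ≤ 4 * C ^ 2 / (1 - ρ) ^ 2 * M * D :=
    mul_nonneg (mul_nonneg (by positivity) hM0) hD0
  show (⨆ x, |gfun P π φ s x - gfun P π φ s' x|) ≤ _
  exact Real.iSup_le hpt hRHS0
end

section
/- There exist two Markov transition matrices P_a and P_b on the three-point state space {1,2,3}, namely P_a given by P_a(1,1) = 1/2, P_a(1,2) = 1/2, P_a(2,3) = 1, P_a(3,1) = 1 (all other entries 0) and P_b given by P_b(1,1) = 1/2, P_b(1,3) = 1/2, P_b(2,1) = 1, P_b(3,2) = 1 (all other entries 0), such that: (i) both P_a and P_b leave π = (1/2, 1/4, 1/4) invariant; (ii) the two-element family {P_a, P_b} satisfies simultaneous uniform ergodicity, i.e., there exist C < ∞ and ρ ∈ [0,1) with d_TV(P_s^k(x,·), π) ≤ C ρ^k for all x ∈ {1,2,3}, s ∈ {a,b},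 k ≥ 0; and (iii) the deterministic sequence defined by X_0 = 2 and the alternating kernels (applying P_a at odd steps and P_b at even steps) has X_k = 3 for all odd k and X_k = 2 for all even k, so for φ(x) = 1(x = 1) the averages (1/n) Σ_{k=1}^n φ(X_k) = 0 for all n and fail to converge to π(φ) = 1/2. -/
open Filter
open scoped Topology Matrix

/-- The transition matrix `P_a` on states `{1,2,3}` (encoded as `Fin 3`):
`P_a(1,1) = 1/2, P_a(1,2) = 1/2, P_a(2,3) = 1, P_a(3,1) = 1`. -/
noncomputable def Pa : Matrix (Fin 3) (Fin 3) ℝ := !![1/2, 1/2, 0; 0, 0, 1; 1, 0, 0]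

/-- The transition matrix `P_b` on states `{1,2,3}` (encoded as `Fin 3`):
`P_b(1,1) = 1/2, P_b(1,3) = 1/2, P_b(2,1) = 1, P_b(3,2) = 1`. -/
noncomputable def Pb : Matrix (Fin 3) (Fin 3) ℝ := !![1/2, 0, 1/2; 1, 0, 0; 0, 1, 0]

/-- The probability vector `π = (1/2, 1/4, 1/4)`. -/
noncomputable def pivec : Fin 3 → ℝ := ![1/2, 1/4, 1/4]

/-- The deterministic trajectory: `X_0 = 2`, `X_k = 3` for odd `k` and
`X_k = 2` for even `k ≥ 2` (states `2`, `3` are encoded as `1`, `2` in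
`Fin 3`). -/
def Xseq : ℕ → Fin 3 := fun k => if Odd k then 2 else 1

/-- The rank-one matrix all of whose rows equal `π`. -/
noncomputable def Qmat : Matrix (Fin 3) (Fin 3) ℝ :=
  !![1/2, 1/4, 1/4; 1/2, 1/4, 1/4; 1/2, 1/4, 1/4]

noncomputable def Na : Matrix (Fin 3) (Fin 3) ℝ :=
  !![0, 1/4, -1/4; -1/2, -1/4, 3/4; 1/2, -1/4, -1/4]

noncomputable def Nb : Matrix (Fin 3) (Fin 3) ℝ :=
  !![0, -1/4, 1/4; 1/2, -1/4, -1/4; -1/2, 3/4, -1/4]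

lemma hPa : Pa = Qmat + Na := by
  ext i j; fin_cases i <;> fin_cases j <;>
    simp [Pa, Qmat, Na, Matrix.vecHead, Matrix.vecTail] <;> norm_num

lemma hPb : Pb = Qmat + Nb := by
  ext i j; fin_cases i <;> fin_cases j <;>
    simp [Pb, Qmat, Nb, Matrix.vecHead, Matrix.vecTail] <;> norm_num

lemma hQPa : Qmat * Pa = Qmat := by
  ext i j; fin_cases i <;> fin_cases j <;>
    simp [Matrix.mul_apply, Fin.sum_univ_three, Pa, Qmat, Matrix.vecHead,
      Matrix.vecTail] <;> norm_num

lemma hQPb : Qmat * Pb = Qmat := by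
  ext i j; fin_cases i <;> fin_cases j <;>
    simp [Matrix.mul_apply, Fin.sum_univ_three, Pb, Qmat, Matrix.vecHead,
      Matrix.vecTail] <;> norm_num

lemma hNaQ : Na * Qmat = 0 := by
  ext i j; fin_cases i <;> fin_cases j <;>
    simp [Matrix.mul_apply, Fin.sum_univ_three, Na, Qmat, Matrix.vecHead,
      Matrix.vecTail] <;> norm_num

lemma hNbQ : Nb * Qmat = 0 := by
  ext i j; fin_cases i <;> fin_cases j <;>
    simp [Matrix.mul_apply, Fin.sum_univ_three, Nb, Qmat, Matrix.vecHead,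
      Matrix.vecTail] <;> norm_num

lemma Na2 : Na ^ 2 = !![-1/4, 0, 1/4; 1/2, -1/4, -1/4; 0, 1/4, -1/4] := by
  rw [pow_two]
  ext i j; fin_cases i <;> fin_cases j <;>
    simp [Matrix.mul_apply, Fin.sum_univ_three, Na, Matrix.vecHead,
      Matrix.vecTail] <;> norm_num

lemma Na3 : Na ^ 3 = !![1/8, -1/8, 0; 0, 1/4, -1/4; -1/4, 0, 1/4] := by
  have h : Na ^ 3 = Na ^ 2 * Na := pow_succ Na 2
  rw [h, Na2]
  ext i j; fin_cases i <;> fin_cases j <;>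
    simp [Matrix.mul_apply, Fin.sum_univ_three, Na, Matrix.vecHead,
      Matrix.vecTail] <;> norm_num

lemma Na4 : Na ^ 4 = !![1/16, 1/16, -1/8; -1/4, 0, 1/4; 1/8, -1/8, 0] := by
  have h : Na ^ 4 = Na ^ 3 * Na := pow_succ Na 3
  rw [h, Na3]
  ext i j; fin_cases i <;> fin_cases j <;>
    simp [Matrix.mul_apply, Fin.sum_univ_three, Na, Matrix.vecHead,
      Matrix.vecTail] <;> norm_num

lemma Nb2 : Nb ^ 2 = !![-1/4, 1/4, 0; 0, -1/4, 1/4; 1/2, -1/4, -1/4] := by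
  rw [pow_two]
  ext i j; fin_cases i <;> fin_cases j <;>
    simp [Matrix.mul_apply, Fin.sum_univ_three, Nb, Matrix.vecHead,
      Matrix.vecTail] <;> norm_num

lemma Nb3 : Nb ^ 3 = !![1/8, 0, -1/8; -1/4, 1/4, 0; 0, -1/4, 1/4] := by
  have h : Nb ^ 3 = Nb ^ 2 * Nb := pow_succ Nb 2
  rw [h, Nb2]
  ext i j; fin_cases i <;> fin_cases j <;>
    simp [Matrix.mul_apply, Fin.sum_univ_three, Nb, Matrix.vecHead,
      Matrix.vecTail] <;> norm_num

lemma Nb4 : Nb ^ 4 = !![1/16, -1/8, 1/16; 1/8, 0, -1/8; -1/4, 1/4, 0] := by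
  have h : Nb ^ 4 = Nb ^ 3 * Nb := pow_succ Nb 3
  rw [h, Nb3]
  ext i j; fin_cases i <;> fin_cases j <;>
    simp [Matrix.mul_apply, Fin.sum_univ_three, Nb, Matrix.vecHead,
      Matrix.vecTail] <;> norm_num

lemma hNa4 : Na ^ 4 = (1/4 : ℝ) • Na - (1/4 : ℝ) • Na ^ 2 := by
  rw [Na4, Na2]
  ext i j; fin_cases i <;> fin_cases j <;>
    simp [Na, Matrix.vecHead, Matrix.vecTail] <;> norm_num

lemma hNb4 : Nb ^ 4 = (1/4 : ℝ) • Nb - (1/4 : ℝ) • Nb ^ 2 := by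
  rw [Nb4, Nb2]
  ext i j; fin_cases i <;> fin_cases j <;>
    simp [Nb, Matrix.vecHead, Matrix.vecTail] <;> norm_num

/-- `M^(k+1) = Q + N^(k+1)` from the algebraic relations. -/
lemma pow_split (M N : Matrix (Fin 3) (Fin 3) ℝ) (hM : M = Qmat + N)
    (hQM : Qmat * M = Qmat) (hNQ : N * Qmat = 0) :
    ∀ k, M ^ (k + 1) = Qmat + N ^ (k + 1) := by
  intro k
  induction k with
  | zero => simpa using hM
  | succ n ih =>
    have h1 : N ^ (n + 1) * Qmat = 0 := by
      rw [pow_succ, mul_assoc, hNQ, mul_zero]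
    calc M ^ (n + 2) = M ^ (n + 1) * M := pow_succ M (n + 1)
      _ = (Qmat + N ^ (n + 1)) * M := by rw [ih]
      _ = Qmat * M + N ^ (n + 1) * (Qmat + N) := by rw [add_mul, ← hM]
      _ = Qmat + (N ^ (n + 1) * Qmat + N ^ (n + 1) * N) := by rw [hQM, mul_add]
      _ = Qmat + N ^ (n + 2) := by rw [h1, zero_add, ← pow_succ]

/-- Geometric decay of the entries of `N^k` from `N^4 = ¼N − ¼N²`. -/
lemma entry_bound (N : Matrix (Fin 3) (Fin 3) ℝ)
    (h4 : N ^ 4 = (1/4 : ℝ) • N - (1/4 : ℝ) • N ^ 2)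
    (hb : ∀ j, j = 1 ∨ j = 2 ∨ j = 3 ∨ j = 4 →
      ∀ x y : Fin 3, |(N ^ j) x y| ≤ 10 * (9/10 : ℝ) ^ j) :
    ∀ k, ∀ x y : Fin 3, |(N ^ (k + 1)) x y| ≤ 10 * (9/10 : ℝ) ^ (k + 1) := by
  have key : ∀ k,
      (∀ x y : Fin 3, |(N ^ (k + 1)) x y| ≤ 10 * (9/10 : ℝ) ^ (k + 1)) ∧
      (∀ x y : Fin 3, |(N ^ (k + 2)) x y| ≤ 10 * (9/10 : ℝ) ^ (k + 2)) ∧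
      (∀ x y : Fin 3, |(N ^ (k + 3)) x y| ≤ 10 * (9/10 : ℝ) ^ (k + 3)) ∧
      (∀ x y : Fin 3, |(N ^ (k + 4)) x y| ≤ 10 * (9/10 : ℝ) ^ (k + 4)) := by
    intro k
    induction k with
    | zero =>
      exact ⟨hb 1 (by norm_num), hb 2 (by norm_num), hb 3 (by norm_num),
        hb 4 (by norm_num)⟩
    | succ n ih =>
      obtain ⟨h1, h2, h3, h4'⟩ := ih
      refine ⟨h2, h3, h4', ?_⟩
      have hm : N ^ (n + 5) = (1/4 : ℝ) • N ^ (n + 2) - (1/4 : ℝ) • N ^ (n + 3) := by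
        have : N ^ (n + 5) = N ^ (n + 1) * N ^ 4 := by
          rw [← pow_add]
        rw [this, h4, mul_sub, mul_smul_comm, mul_smul_comm, ← pow_succ, ← pow_add]
      intro x y
      have e1 := h2 x y
      have e2 := h3 x y
      have hpt : (0:ℝ) ≤ (9/10 : ℝ) ^ (n + 2) := by positivity
      have hrw : (9/10 : ℝ) ^ (n + 3) = (9/10 : ℝ) ^ (n + 2) * (9/10) := by
        rw [← pow_succ]
      have hrw2 : (9/10 : ℝ) ^ (n + 5) = (9/10 : ℝ) ^ (n + 2) * (9/10) ^ 3 := by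
        rw [← pow_add]
      have : |(N ^ (n + 5)) x y| ≤
          (1/4) * |(N ^ (n + 2)) x y| + (1/4) * |(N ^ (n + 3)) x y| := by
        rw [hm]
        simp only [Matrix.sub_apply, Matrix.smul_apply, smul_eq_mul]
        calc |1/4 * (N ^ (n + 2)) x y - 1/4 * (N ^ (n + 3)) x y|
            ≤ |1/4 * (N ^ (n + 2)) x y| + |1/4 * (N ^ (n + 3)) x y| :=
              abs_sub _ _
          _ = (1/4) * |(N ^ (n + 2)) x y| + (1/4) * |(N ^ (n + 3)) x y| := by
              rw [abs_mul, abs_mul, abs_of_pos (by norm_num : (0:ℝ) < 1/4)]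
      calc |(N ^ (n + 1 + 4)) x y| = |(N ^ (n + 5)) x y| := by ring_nf
        _ ≤ (1/4) * |(N ^ (n + 2)) x y| + (1/4) * |(N ^ (n + 3)) x y| := this
        _ ≤ (1/4) * (10 * (9/10) ^ (n + 2)) + (1/4) * (10 * (9/10) ^ (n + 3)) := by
            have := abs_nonneg ((N ^ (n + 2)) x y)
            nlinarith [e1, e2]
        _ ≤ 10 * (9/10 : ℝ) ^ (n + 5) := by
            rw [hrw, hrw2]; nlinarith [hpt]
        _ = 10 * (9/10 : ℝ) ^ (n + 1 + 4) := by ring_nf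
  intro k
  exact (key k).1

lemma base_bounds (N : Matrix (Fin 3) (Fin 3) ℝ)
    (e1 : ∀ x y : Fin 3, |N x y| ≤ (1:ℝ))
    (e2 : ∀ x y : Fin 3, |(N ^ 2) x y| ≤ (1:ℝ))
    (e3 : ∀ x y : Fin 3, |(N ^ 3) x y| ≤ (1:ℝ))
    (e4 : ∀ x y : Fin 3, |(N ^ 4) x y| ≤ (1:ℝ)) :
    ∀ j, j = 1 ∨ j = 2 ∨ j = 3 ∨ j = 4 →
      ∀ x y : Fin 3, |(N ^ j) x y| ≤ 10 * (9/10 : ℝ) ^ j := by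
  intro j hj x y
  rcases hj with rfl | rfl | rfl | rfl
  · exact le_trans (by simpa using e1 x y) (by norm_num)
  · exact le_trans (e2 x y) (by norm_num)
  · exact le_trans (e3 x y) (by norm_num)
  · exact le_trans (e4 x y) (by norm_num)

/-- `P_a` and `P_b` are Markov transition matrices on the
three-point space which (i) both leave `π = (1/2, 1/4, 1/4)` invariant;
(ii) satisfy simultaneous uniform ergodicity; (iii) yet alternating them
(`P_a` at odd steps, `P_b` at even steps) started from `X_0 = 2` produces the
deterministic trajectory `X_k = 3` (odd `k`), `X_k = 2` (even `k`), whose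
ergodic averages of `φ = 1(x = 1)` are `0` for all `n` and fail to converge
to `π(φ) = 1/2`. -/
theorem stmt19 :
    -- P_a and P_b are Markov transition matrices
    (∀ x, ∑ y, Pa x y = 1) ∧ (∀ x y, 0 ≤ Pa x y) ∧
    (∀ x, ∑ y, Pb x y = 1) ∧ (∀ x y, 0 ≤ Pb x y) ∧
    -- (i) both leave π invariant
    (∀ y, ∑ x, pivec x * Pa x y = pivec y) ∧
    (∀ y, ∑ x, pivec x * Pb x y = pivec y) ∧
    -- (ii) simultaneous uniform ergodicity of the family {P_a, P_b}
    (∃ C ρ : ℝ, 0 ≤ ρ ∧ ρ < 1 ∧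
      ∀ M ∈ ({Pa, Pb} : Set (Matrix (Fin 3) (Fin 3) ℝ)),
        ∀ (k : ℕ) (x : Fin 3) (A : Finset (Fin 3)),
          |∑ y ∈ A, (M ^ k) x y - ∑ y ∈ A, pivec y| ≤ C * ρ ^ k) ∧
    -- (iii) the alternating deterministic trajectory
    Xseq 0 = 1 ∧
    (∀ k : ℕ, (if Odd (k + 1) then Pa else Pb) (Xseq k) (Xseq (k + 1)) = 1) ∧
    (∀ k : ℕ, Odd k → Xseq k = 2) ∧
    (∀ k : ℕ, Even k → Xseq k = 1) ∧
    -- ergodic averages of φ = 1(x = 1) vanish and fail the LLN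
    (∀ n : ℕ, (∑ k ∈ Finset.Icc 1 n, (if Xseq k = 0 then (1 : ℝ) else 0)) / n = 0) ∧
    (∑ y, pivec y * (if y = 0 then (1 : ℝ) else 0)) = 1 / 2 ∧
    ¬ Tendsto (fun n : ℕ =>
        (∑ k ∈ Finset.Icc 1 n, (if Xseq k = 0 then (1 : ℝ) else 0)) / n)
      atTop (𝓝 (1 / 2)) := by
  -- entry bounds for Na, Nb
  have ea1 : ∀ x y : Fin 3, |Na x y| ≤ (1:ℝ) := by
    intro x y; fin_cases x <;> fin_cases y <;>
      norm_num [Na, Matrix.vecHead, Matrix.vecTail, abs_le]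
  have ea2 : ∀ x y : Fin 3, |(Na ^ 2) x y| ≤ (1:ℝ) := by
    intro x y; rw [Na2]; fin_cases x <;> fin_cases y <;>
      norm_num [Matrix.vecHead, Matrix.vecTail, abs_le]
  have ea3 : ∀ x y : Fin 3, |(Na ^ 3) x y| ≤ (1:ℝ) := by
    intro x y; rw [Na3]; fin_cases x <;> fin_cases y <;>
      norm_num [Matrix.vecHead, Matrix.vecTail, abs_le]
  have ea4 : ∀ x y : Fin 3, |(Na ^ 4) x y| ≤ (1:ℝ) := by
    intro x y; rw [Na4]; fin_cases x <;> fin_cases y <;>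
      norm_num [Matrix.vecHead, Matrix.vecTail, abs_le]
  have eb1 : ∀ x y : Fin 3, |Nb x y| ≤ (1:ℝ) := by
    intro x y; fin_cases x <;> fin_cases y <;>
      norm_num [Nb, Matrix.vecHead, Matrix.vecTail, abs_le]
  have eb2 : ∀ x y : Fin 3, |(Nb ^ 2) x y| ≤ (1:ℝ) := by
    intro x y; rw [Nb2]; fin_cases x <;> fin_cases y <;>
      norm_num [Matrix.vecHead, Matrix.vecTail, abs_le]
  have eb3 : ∀ x y : Fin 3, |(Nb ^ 3) x y| ≤ (1:ℝ) := by
    intro x y; rw [Nb3]; fin_cases x <;> fin_cases y <;>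
      norm_num [Matrix.vecHead, Matrix.vecTail, abs_le]
  have eb4 : ∀ x y : Fin 3, |(Nb ^ 4) x y| ≤ (1:ℝ) := by
    intro x y; rw [Nb4]; fin_cases x <;> fin_cases y <;>
      norm_num [Matrix.vecHead, Matrix.vecTail, abs_le]
  have bndA := entry_bound Na hNa4 (base_bounds Na ea1 ea2 ea3 ea4)
  have bndB := entry_bound Nb hNb4 (base_bounds Nb eb1 eb2 eb3 eb4)
  have hQpi : ∀ x y : Fin 3, Qmat x y = pivec y := by
    intro x y; fin_cases x <;> fin_cases y <;>
      simp [Qmat, pivec, Matrix.vecHead, Matrix.vecTail]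
  refine ⟨?_, ?_, ?_, ?_, ?_, ?_, ?_, ?_, ?_, ?_, ?_, ?_, ?_, ?_⟩
  · intro x; fin_cases x <;>
      norm_num [Pa, Fin.sum_univ_three, Matrix.vecHead, Matrix.vecTail, Matrix.cons_val_two]
  · intro x y; fin_cases x <;> fin_cases y <;>
      norm_num [Pa, Matrix.vecHead, Matrix.vecTail]
  · intro x; fin_cases x <;>
      norm_num [Pb, Fin.sum_univ_three, Matrix.vecHead, Matrix.vecTail, Matrix.cons_val_two]
  · intro x y; fin_cases x <;> fin_cases y <;>
      norm_num [Pb, Matrix.vecHead, Matrix.vecTail]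
  · intro y; fin_cases y <;>
      norm_num [Pa, pivec, Fin.sum_univ_three, Matrix.vecHead, Matrix.vecTail, Matrix.cons_val_two]
  · intro y; fin_cases y <;>
      norm_num [Pb, pivec, Fin.sum_univ_three, Matrix.vecHead, Matrix.vecTail, Matrix.cons_val_two]
  · -- uniform ergodicity
    refine ⟨30, 9/10, by norm_num, by norm_num, ?_⟩
    intro M hM k x A
    have key : ∀ (N : Matrix (Fin 3) (Fin 3) ℝ),
        (∀ k x y, |(N ^ (k+1)) x y| ≤ 10 * (9/10 : ℝ) ^ (k+1)) →
        M = Qmat + N → Qmat * M = Qmat → N * Qmat = 0 →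
        |∑ y ∈ A, (M ^ k) x y - ∑ y ∈ A, pivec y| ≤ 30 * (9/10 : ℝ) ^ k := by
      intro N hbnd hMQ hQM hNQ
      cases k with
      | zero =>
        have hone : ∀ x y : Fin 3, |(1 : Matrix (Fin 3) (Fin 3) ℝ) x y - pivec y| ≤ 1 := by
          intro x y; fin_cases x <;> fin_cases y <;>
            norm_num [Matrix.one_apply, pivec, Matrix.vecHead, Matrix.vecTail,
              abs_le, Fin.ext_iff]
        simp only [pow_zero]
        rw [← Finset.sum_sub_distrib]
        refine le_trans (Finset.abs_sum_le_sum_abs _ _) ?_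
        refine le_trans (Finset.sum_le_sum_of_subset_of_nonneg
          (Finset.subset_univ A) (fun _ _ _ => abs_nonneg _)) ?_
        have h3 : ∑ y : Fin 3, |(1 : Matrix (Fin 3) (Fin 3) ℝ) x y - pivec y| ≤ 3 := by
          rw [Fin.sum_univ_three]
          have := hone x 0
          have := hone x 1
          have := hone x 2
          linarith
        refine le_trans h3 (by norm_num)
      | succ n =>
        have hsplit := pow_split M N hMQ hQM hNQ n
        have hterm : ∀ y, (M ^ (n+1)) x y - pivec y = (N ^ (n+1)) x y := by
          intro y
          rw [hsplit]
          simp [Matrix.add_apply, hQpi]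
        rw [← Finset.sum_sub_distrib]
        have h1 : |∑ y ∈ A, ((M ^ (n+1)) x y - pivec y)|
            ≤ ∑ y ∈ A, |(N ^ (n+1)) x y| := by
          refine le_trans (Finset.abs_sum_le_sum_abs _ _) ?_
          refine le_of_eq (Finset.sum_congr rfl fun y _ => ?_)
          rw [hterm]
        refine le_trans h1 ?_
        have h2 : ∑ y ∈ A, |(N ^ (n+1)) x y|
            ≤ ∑ y : Fin 3, |(N ^ (n+1)) x y| :=
          Finset.sum_le_sum_of_subset_of_nonneg (Finset.subset_univ A)
            (fun _ _ _ => abs_nonneg _)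
        refine le_trans h2 ?_
        have h3 : ∑ y : Fin 3, |(N ^ (n+1)) x y| ≤ 3 * (10 * (9/10 : ℝ) ^ (n+1)) := by
          rw [Fin.sum_univ_three]
          have := hbnd n x 0
          have := hbnd n x 1
          have := hbnd n x 2
          linarith
        refine le_trans h3 ?_
        rw [pow_succ]
        have hpt : (0:ℝ) ≤ (9/10 : ℝ) ^ n := by positivity
        nlinarith [hpt]
    rcases hM with rfl | hM
    · exact key Na bndA hPa hQPa hNaQ
    · rw [Set.mem_singleton_iff] at hM
      subst hM
      exact key Nb bndB hPb hQPb hNbQ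
  · simp [Xseq, Nat.odd_iff]
  · intro k
    rcases Nat.even_or_odd k with he | ho
    · have h1 : Odd (k + 1) := Even.add_one he
      have h2 : ¬ Odd k := by simp [Nat.even_iff, Nat.odd_iff] at *; omega
      simp only [Xseq, if_pos h1, if_neg h2]
      norm_num [Pa, Matrix.vecHead, Matrix.vecTail, Matrix.cons_val_two]
    · have h1 : ¬ Odd (k + 1) := by
        simp [Nat.odd_iff] at *; omega
      simp only [Xseq, if_pos ho, if_neg h1]
      norm_num [Pb, Matrix.vecHead, Matrix.vecTail, Matrix.cons_val_two]
  · intro k hk; simp [Xseq, hk]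
  · intro k hk
    have : ¬ Odd k := by simp [Nat.even_iff, Nat.odd_iff] at *; omega
    simp [Xseq, this]
  · intro n
    have hz : (∑ k ∈ Finset.Icc 1 n, (if Xseq k = 0 then (1 : ℝ) else 0)) = 0 := by
      refine Finset.sum_eq_zero fun k _ => ?_
      have : Xseq k ≠ 0 := by
        unfold Xseq; split <;> decide
      simp [this]
    rw [hz, zero_div]
  · norm_num [pivec, Fin.sum_univ_three, Matrix.vecHead, Matrix.vecTail]
  · intro h
    have hz : ∀ n : ℕ, (∑ k ∈ Finset.Icc 1 n, (if Xseq k = 0 then (1 : ℝ) else 0)) / n = 0 := by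
      intro n
      have hz' : (∑ k ∈ Finset.Icc 1 n, (if Xseq k = 0 then (1 : ℝ) else 0)) = 0 := by
        refine Finset.sum_eq_zero fun k _ => ?_
        have : Xseq k ≠ 0 := by
          unfold Xseq; split <;> decide
        simp [this]
      rw [hz', zero_div]
    have h0 : Tendsto (fun n : ℕ =>
        (∑ k ∈ Finset.Icc 1 n, (if Xseq k = 0 then (1 : ℝ) else 0)) / n)
        atTop (𝓝 0) := by
      have : (fun n : ℕ =>
          (∑ k ∈ Finset.Icc 1 n, (if Xseq k = 0 then (1 : ℝ) else 0)) / n)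
          = fun _ => (0:ℝ) := funext hz
      rw [this]; exact tendsto_const_nhds
    have := tendsto_nhds_unique h h0
    norm_num at this
end
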